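/- Let U be unitary and ΔU a perturbation. Then (U + ΔU)[(U + ΔU)†(U + ΔU)]^{-1/2} = U + (1/2)(ΔU − U ΔU† U) + O(‖ΔU‖²); i.e., to first order in ΔU, the polar projection of U + ΔU equals U plus the tangent-space projection of ΔU. -/

import Mathlib

open Matrix Asymptotics
open scoped ComplexOrder Topology

attribute [local instance] Matrix.frobeniusNormedAddCommGroup

/-- The positive semidefinite square root of a positive semidefinite matrix (removed from
Mathlib; restored here with its former definition). -/
noncomputable def Matrix.PosSemidef.sqrt {n 𝕜 : Type*} [Fintype n] [RCLike 𝕜] [DecidableEq n]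
    {A : Matrix n n 𝕜} (hA : A.PosSemidef) : Matrix n n 𝕜 :=
  hA.1.eigenvectorUnitary.1 * diagonal ((↑) ∘ (√·) ∘ hA.1.eigenvalues) *
    (star hA.1.eigenvectorUnitary : Matrix n n 𝕜)

lemma Matrix.PosSemidef.posSemidef_sqrt {n 𝕜 : Type*} [Fintype n] [RCLike 𝕜] [DecidableEq n]
    {A : Matrix n n 𝕜} (hA : A.PosSemidef) : hA.sqrt.PosSemidef := by
  unfold Matrix.PosSemidef.sqrt
  have h := (posSemidef_diagonal_iff.mpr (fun i => by
    simp only [Function.comp_apply, RCLike.ofReal_nonneg]; exact Real.sqrt_nonneg _) :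
      (diagonal ((↑) ∘ (√·) ∘ hA.1.eigenvalues) : Matrix n n 𝕜).PosSemidef)
  have := h.mul_mul_conjTranspose_same (hA.1.eigenvectorUnitary.1)
  simpa [Matrix.star_eq_conjTranspose] using this

lemma Matrix.PosSemidef.sqrt_mul_self {n 𝕜 : Type*} [Fintype n] [RCLike 𝕜] [DecidableEq n]
    {A : Matrix n n 𝕜} (hA : A.PosSemidef) : hA.sqrt * hA.sqrt = A := by
  unfold Matrix.PosSemidef.sqrt
  conv_rhs => rw [hA.1.spectral_theorem]
  have hu : (star hA.1.eigenvectorUnitary : Matrix n n 𝕜) * hA.1.eigenvectorUnitary.1 = 1 :=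
    Unitary.coe_star_mul_self _
  have hd : (diagonal ((↑) ∘ (√·) ∘ hA.1.eigenvalues) : Matrix n n 𝕜) *
      diagonal ((↑) ∘ (√·) ∘ hA.1.eigenvalues) = diagonal (RCLike.ofReal ∘ hA.1.eigenvalues) := by
    rw [diagonal_mul_diagonal]
    congr 1; funext i
    simp only [Function.comp_apply, ← RCLike.ofReal_mul]
    rw [Real.mul_self_sqrt (hA.eigenvalues_nonneg i)]
  simp only [Unitary.conjStarAlgAut_apply]
  rw [← hd]
  simp only [Matrix.mul_assoc]
  rw [← Matrix.mul_assoc (star _ : Matrix n n 𝕜), hu, Matrix.one_mul]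

lemma aux_trace_nonneg {m : Type*} [Fintype m] [DecidableEq m] {M : Matrix m m ℂ}
    (hM : M.PosSemidef) : 0 ≤ M.trace := by
  rw [Matrix.trace]
  apply Finset.sum_nonneg
  intro i _
  have h := hM.diag_nonneg (i := i)
  simpa using h

lemma aux_trace_conjTranspose_mul_self {m : Type*} [Fintype m] (X : Matrix m m ℂ) :
    (Xᴴ * X).trace = ((‖X‖ ^ 2 : ℝ) : ℂ) := by
  have hnorm : ‖X‖ ^ 2 = ∑ i, ∑ j, ‖X i j‖ ^ 2 := by
    rw [Matrix.frobenius_norm_def]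
    rw [← Real.rpow_natCast ((∑ i, ∑ j, ‖X i j‖ ^ (2:ℝ)) ^ (1/2 : ℝ)) 2,
      ← Real.rpow_mul (by positivity)]
    norm_num
  rw [hnorm, Matrix.trace]
  push_cast
  simp only [Matrix.diag_apply, Matrix.mul_apply, Matrix.conjTranspose_apply,
    Complex.star_def, RCLike.conj_mul]
  rw [Finset.sum_comm]
  norm_num

lemma aux_norm_sqrt_sub_one_le {m : Type*} [Fintype m] [DecidableEq m]
    {S E : Matrix m m ℂ} (hS : S.PosSemidef) (h : S * S = 1 + E) :
    ‖S - 1‖ ≤ ‖E‖ := by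
  set T := S - 1 with hTdef
  have hS1 : S = 1 + T := by rw [hTdef]; abel
  have hTh : Tᴴ = T := by
    rw [hTdef, Matrix.conjTranspose_sub, hS.1.eq, Matrix.conjTranspose_one]
  have hEh : E = T * T + T + T := by
    have h2 : (1 : Matrix m m ℂ) + (T * T + T + T) = 1 + E := by
      rw [← h, hS1]; noncomm_ring
    exact (add_left_cancel h2).symm
  have hkey : E * E = T * T + T * (S * S + S + S) * T := by
    rw [hEh, hS1]; noncomm_ring
  have hM : (S * S + S + S).PosSemidef := by
    have h1 : (S * S).PosSemidef := by
      have := Matrix.posSemidef_conjTranspose_mul_self S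
      rwa [hS.1.eq] at this
    have h2 : (S + S).PosSemidef := hS.add hS
    have := h1.add h2
    rwa [← add_assoc] at this
  have hTMT : (T * (S * S + S + S) * T).PosSemidef := by
    have := hM.conjTranspose_mul_mul_same T
    rwa [hTh] at this
  have htr : ((T * T).trace : ℂ) ≤ (E * E).trace := by
    rw [hkey, Matrix.trace_add]
    exact le_add_of_nonneg_right (aux_trace_nonneg hTMT)
  have hEherm : Eᴴ = E := by
    rw [hEh]
    simp [Matrix.conjTranspose_add, Matrix.conjTranspose_mul, hTh]
  have h1 : (T * T).trace = ((‖T‖ ^ 2 : ℝ) : ℂ) := by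
    conv_lhs => rw [show T * T = Tᴴ * T by rw [hTh]]
    exact aux_trace_conjTranspose_mul_self T
  have h2 : (E * E).trace = ((‖E‖ ^ 2 : ℝ) : ℂ) := by
    conv_lhs => rw [show E * E = Eᴴ * E by rw [hEherm]]
    exact aux_trace_conjTranspose_mul_self E
  rw [h1, h2, Complex.real_le_real] at htr
  nlinarith [norm_nonneg T, norm_nonneg E]

lemma aux_det_ne_zero {m : Type*} [Fintype m] [DecidableEq m] {S : Matrix m m ℂ}
    (h : ‖S - 1‖ < 1) : S.det ≠ 0 := by
  intro h0
  obtain ⟨x, hx0, hSx⟩ := Matrix.exists_mulVec_eq_zero_iff.mpr h0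
  have hcol : Matrix.replicateCol Unit x = (1 - S) * Matrix.replicateCol Unit x := by
    rw [Matrix.sub_mul, Matrix.one_mul, ← Matrix.replicateCol_mulVec, hSx]
    ext i j
    simp
  have hn : ‖Matrix.replicateCol Unit x‖ ≤ ‖(1 : Matrix m m ℂ) - S‖ * ‖Matrix.replicateCol Unit x‖ := by
    conv_lhs => rw [hcol]
    exact Matrix.frobenius_norm_mul _ _
  have h1 : ‖(1 : Matrix m m ℂ) - S‖ < 1 := by rwa [norm_sub_rev]
  have hx : Matrix.replicateCol Unit x ≠ 0 := by
    intro hc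
    apply hx0
    funext i
    have := congrFun (congrFun hc i) ⟨⟩
    simpa [Matrix.replicateCol] using this
  have hpos : 0 < ‖Matrix.replicateCol Unit x‖ := norm_pos_iff.mpr hx
  nlinarith

section
attribute [local instance] Matrix.frobeniusNormedSpace

lemma aux_norm_half_smul {m : Type*} [Fintype m] (X : Matrix m m ℂ) :
    ‖((1 : ℂ)/2) • X‖ ≤ ‖X‖ := by
  rw [norm_smul]
  have : ‖((1 : ℂ)/2)‖ = 1/2 := by norm_num
  rw [this]
  nlinarith [norm_nonneg X]

end


set_option maxHeartbeats 1000000 in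
lemma aux_main_bound {n : ℕ} (U : Matrix (Fin n) (Fin n) ℂ)
    (hU1 : Uᴴ * U = 1) (hU2 : U * Uᴴ = 1) (Δ : Matrix (Fin n) (Fin n) ℂ)
    (hΔ1 : ‖Δ‖ ≤ 1) (hΔ2 : ‖Δ‖ < 1 / (2 * (2 * ‖U‖ + 1))) :
    ‖(U + Δ) * ((Matrix.posSemidef_conjTranspose_mul_self (U + Δ)).sqrt)⁻¹
          - (U + ((1 : ℂ)/2) • (Δ - U * Δᴴ * U))‖
      ≤ ((2 * ‖U‖ + 1) * ((2 * ‖U‖ + 1) * (2 * ‖(1 : Matrix (Fin n) (Fin n) ℂ)‖)) * ‖U‖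
          + (2 * ‖U‖ + 1) * (2 * ‖(1 : Matrix (Fin n) (Fin n) ℂ)‖)
          + (2 * ‖U‖ + 1) * (2 * ‖U‖ + 1) * ‖U‖ + ‖U‖) * (‖Δ‖ * ‖Δ‖) := by
  have normmul : ∀ X Y : Matrix (Fin n) (Fin n) ℂ, ‖X * Y‖ ≤ ‖X‖ * ‖Y‖ := fun X Y =>
    Matrix.frobenius_norm_mul X Y
  have normct : ∀ X : Matrix (Fin n) (Fin n) ℂ, ‖Xᴴ‖ = ‖X‖ := fun X =>
    Matrix.frobenius_norm_conjTranspose X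
  set K : ℝ := 2 * ‖U‖ + 1 with hKdef
  have hK0 : 0 < K := by positivity
  set e1 : ℝ := ‖(1 : Matrix (Fin n) (Fin n) ℂ)‖ with he1
  have he10 : 0 ≤ e1 := norm_nonneg _
  set A : Matrix (Fin n) (Fin n) ℂ := U + Δ with hA
  set S : Matrix (Fin n) (Fin n) ℂ :=
    (Matrix.posSemidef_conjTranspose_mul_self A).sqrt with hSdef
  have hSpsd : S.PosSemidef := (Matrix.posSemidef_conjTranspose_mul_self A).posSemidef_sqrt
  have hSS : S * S = Aᴴ * A := (Matrix.posSemidef_conjTranspose_mul_self A).sqrt_mul_self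
  set T : Matrix (Fin n) (Fin n) ℂ := S - 1 with hTdef
  have hS1 : S = 1 + T := by rw [hTdef]; abel
  have hexp : Aᴴ * A = 1 + (Uᴴ * Δ + Δᴴ * U + Δᴴ * Δ) := by
    rw [hA]
    simp only [Matrix.conjTranspose_add, Matrix.add_mul, Matrix.mul_add, hU1]
    abel
  have hE : T * T + T + T = Uᴴ * Δ + Δᴴ * U + Δᴴ * Δ := by
    have h2 : (1 : Matrix (Fin n) (Fin n) ℂ) + (T * T + T + T)
        = 1 + (Uᴴ * Δ + Δᴴ * U + Δᴴ * Δ) := by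
      rw [← hexp, ← hSS, hS1]; noncomm_ring
    exact add_left_cancel h2
  -- norm bounds on E and T
  have t1 : ‖Uᴴ * Δ‖ ≤ ‖U‖ * ‖Δ‖ := by
    have := normmul Uᴴ Δ; rwa [normct] at this
  have t2 : ‖Δᴴ * U‖ ≤ ‖Δ‖ * ‖U‖ := by
    have := normmul Δᴴ U; rwa [normct] at this
  have t3 : ‖Δᴴ * Δ‖ ≤ ‖Δ‖ * ‖Δ‖ := by
    have := normmul Δᴴ Δ; rwa [normct] at this
  have hEnorm : ‖Uᴴ * Δ + Δᴴ * U + Δᴴ * Δ‖ ≤ K * ‖Δ‖ := by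
    have s1 : ‖Uᴴ * Δ + Δᴴ * U + Δᴴ * Δ‖ ≤ ‖Uᴴ * Δ + Δᴴ * U‖ + ‖Δᴴ * Δ‖ := norm_add_le _ _
    have s2 : ‖Uᴴ * Δ + Δᴴ * U‖ ≤ ‖Uᴴ * Δ‖ + ‖Δᴴ * U‖ := norm_add_le _ _
    rw [hKdef]
    nlinarith [norm_nonneg Δ, norm_nonneg U]
  have hTK : ‖T‖ ≤ K * ‖Δ‖ := by
    have h' : S * S = 1 + (Uᴴ * Δ + Δᴴ * U + Δᴴ * Δ) := by rw [hSS, hexp]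
    have := aux_norm_sqrt_sub_one_le hSpsd h'
    rw [← hTdef] at this
    exact this.trans hEnorm
  have hThalf : ‖T‖ ≤ 1 / 2 := by
    have hKK : K * (1 / (2 * K)) = 1 / 2 := by field_simp
    have : K * ‖Δ‖ ≤ 1 / 2 := by
      rw [← hKK]; exact mul_le_mul_of_nonneg_left hΔ2.le hK0.le
    exact hTK.trans this
  -- invertibility of S
  have hdet : S.det ≠ 0 := by
    apply aux_det_ne_zero
    rw [← hTdef]; linarith
  have hJ : S * S⁻¹ = 1 := Matrix.mul_nonsing_inv S (isUnit_iff_ne_zero.mpr hdet)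
  have hJ2 : S⁻¹ = 1 - T * S⁻¹ := by
    have h' : (1 + T) * S⁻¹ = 1 := by rw [← hS1]; exact hJ
    rw [Matrix.add_mul, Matrix.one_mul] at h'
    exact eq_sub_of_add_eq h'
  have hJle : ‖S⁻¹‖ ≤ 2 * e1 := by
    have h1' : ‖S⁻¹‖ ≤ e1 + ‖T‖ * ‖S⁻¹‖ := by
      conv_lhs => rw [hJ2]
      exact (norm_sub_le _ _).trans (add_le_add le_rfl (normmul _ _))
    nlinarith [norm_nonneg (S⁻¹), mul_le_mul_of_nonneg_right hThalf (norm_nonneg (S⁻¹))]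
  -- the algebraic identity
  have e2 : T - T * S⁻¹ = T * (T * S⁻¹) := by
    conv_lhs => rw [hJ2]
    rw [Matrix.mul_sub, Matrix.mul_one]
    abel
  have e3 : U * T - U * (T * S⁻¹) = U * (T * (T * S⁻¹)) := by rw [← Matrix.mul_sub, e2]
  have e1' : U * (Uᴴ * Δ + Δᴴ * U) = Δ + U * Δᴴ * U := by
    rw [Matrix.mul_add, ← Matrix.mul_assoc, ← Matrix.mul_assoc, hU2, Matrix.one_mul]
  have e0 : Uᴴ * Δ + Δᴴ * U = T * T + T + T - Δᴴ * Δ := by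
    rw [eq_sub_iff_add_eq]; exact hE.symm
  have h1 : Δ + U * Δᴴ * U = U * (T * T) + (U * T + U * T) - U * (Δᴴ * Δ) := by
    rw [← e1', e0, Matrix.mul_sub, Matrix.mul_add, Matrix.mul_add]
    abel
  have hid : A * S⁻¹ - (U + ((1 : ℂ)/2) • (Δ - U * Δᴴ * U))
      = U * (T * (T * S⁻¹)) - Δ * (T * S⁻¹)
        + ((1 : ℂ)/2) • (U * (T * T)) - ((1 : ℂ)/2) • (U * (Δᴴ * Δ)) := by
    calc A * S⁻¹ - (U + ((1 : ℂ)/2) • (Δ - U * Δᴴ * U))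
        = (U + Δ) * (1 - T * S⁻¹) - (U + ((1 : ℂ)/2) • (Δ - U * Δᴴ * U)) := by
          conv_lhs => rw [hA, hJ2]
      _ = ((1 : ℂ)/2) • (Δ + U * Δᴴ * U) - U * (T * S⁻¹) - Δ * (T * S⁻¹) := by
          rw [Matrix.add_mul, Matrix.mul_sub, Matrix.mul_sub, Matrix.mul_one, Matrix.mul_one]
          module
      _ = ((1 : ℂ)/2) • (U * (T * T)) + (U * T - U * (T * S⁻¹))
            - ((1 : ℂ)/2) • (U * (Δᴴ * Δ)) - Δ * (T * S⁻¹) := by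
          rw [h1]; module
      _ = U * (T * (T * S⁻¹)) - Δ * (T * S⁻¹)
            + ((1 : ℂ)/2) • (U * (T * T)) - ((1 : ℂ)/2) • (U * (Δᴴ * Δ)) := by
          rw [e3]; module
  rw [hid]
  -- final numeric bound
  have n1 : ‖U * (T * (T * S⁻¹)) - Δ * (T * S⁻¹)
        + ((1 : ℂ)/2) • (U * (T * T)) - ((1 : ℂ)/2) • (U * (Δᴴ * Δ))‖
      ≤ ‖U * (T * (T * S⁻¹))‖ + ‖Δ * (T * S⁻¹)‖
        + ‖((1 : ℂ)/2) • (U * (T * T))‖ + ‖((1 : ℂ)/2) • (U * (Δᴴ * Δ))‖ := by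
    have u1 := norm_sub_le (U * (T * (T * S⁻¹)) - Δ * (T * S⁻¹)
        + ((1 : ℂ)/2) • (U * (T * T))) (((1 : ℂ)/2) • (U * (Δᴴ * Δ)))
    have u2 := norm_add_le (U * (T * (T * S⁻¹)) - Δ * (T * S⁻¹))
        (((1 : ℂ)/2) • (U * (T * T)))
    have u3 := norm_sub_le (U * (T * (T * S⁻¹))) (Δ * (T * S⁻¹))
    linarith
  have hs1 : ‖((1 : ℂ)/2) • (U * (T * T))‖ ≤ ‖U * (T * T)‖ := aux_norm_half_smul _
  have hs2 : ‖((1 : ℂ)/2) • (U * (Δᴴ * Δ))‖ ≤ ‖U * (Δᴴ * Δ)‖ := aux_norm_half_smul _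
  have a1 : ‖T * S⁻¹‖ ≤ ‖T‖ * ‖S⁻¹‖ := normmul _ _
  have a2 : ‖T * (T * S⁻¹)‖ ≤ ‖T‖ * (‖T‖ * ‖S⁻¹‖) :=
    (normmul _ _).trans (mul_le_mul_of_nonneg_left a1 (norm_nonneg T))
  have m1 : ‖U * (T * (T * S⁻¹))‖ ≤ ‖U‖ * (‖T‖ * (‖T‖ * ‖S⁻¹‖)) :=
    (normmul _ _).trans (mul_le_mul_of_nonneg_left a2 (norm_nonneg U))
  have m2 : ‖Δ * (T * S⁻¹)‖ ≤ ‖Δ‖ * (‖T‖ * ‖S⁻¹‖) :=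
    (normmul _ _).trans (mul_le_mul_of_nonneg_left a1 (norm_nonneg Δ))
  have m3 : ‖U * (T * T)‖ ≤ ‖U‖ * (‖T‖ * ‖T‖) :=
    (normmul _ _).trans (mul_le_mul_of_nonneg_left (normmul _ _) (norm_nonneg U))
  have m4 : ‖U * (Δᴴ * Δ)‖ ≤ ‖U‖ * (‖Δ‖ * ‖Δ‖) :=
    (normmul _ _).trans (mul_le_mul_of_nonneg_left t3 (norm_nonneg U))
  have hTn : 0 ≤ ‖T‖ := norm_nonneg _
  have hSn : 0 ≤ ‖S⁻¹‖ := norm_nonneg _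
  have hKΔ : 0 ≤ K * ‖Δ‖ := mul_nonneg hK0.le (norm_nonneg _)
  have p1 : ‖T‖ * ‖S⁻¹‖ ≤ (K * ‖Δ‖) * (2 * e1) :=
    mul_le_mul hTK hJle hSn hKΔ
  have p2 : ‖T‖ * (‖T‖ * ‖S⁻¹‖) ≤ (K * ‖Δ‖) * ((K * ‖Δ‖) * (2 * e1)) :=
    mul_le_mul hTK p1 (mul_nonneg hTn hSn) hKΔ
  have p3 : ‖T‖ * ‖T‖ ≤ (K * ‖Δ‖) * (K * ‖Δ‖) :=
    mul_le_mul hTK hTK hTn hKΔ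
  have q1 := mul_le_mul_of_nonneg_left p2 (norm_nonneg U)
  have q2 := mul_le_mul_of_nonneg_left p1 (norm_nonneg Δ)
  have q3 := mul_le_mul_of_nonneg_left p3 (norm_nonneg U)
  have q4 : ‖Δ‖ * ((K * ‖Δ‖) * (2 * e1)) ≤ 1 * ((K * ‖Δ‖) * (2 * e1)) :=
    mul_le_mul_of_nonneg_right hΔ1 (mul_nonneg hKΔ (by positivity))
  calc ‖U * (T * (T * S⁻¹)) - Δ * (T * S⁻¹)
        + ((1 : ℂ)/2) • (U * (T * T)) - ((1 : ℂ)/2) • (U * (Δᴴ * Δ))‖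
      ≤ ‖U‖ * (K * ‖Δ‖ * (K * ‖Δ‖ * (2 * e1))) + ‖Δ‖ * (K * ‖Δ‖ * (2 * e1))
        + ‖U‖ * (K * ‖Δ‖ * (K * ‖Δ‖)) + ‖U‖ * (‖Δ‖ * ‖Δ‖) := by
        have b1 := m1.trans q1
        have b2 := m2.trans q2
        have b3 := hs1.trans (m3.trans q3)
        have b4 := hs2.trans m4
        exact n1.trans (add_le_add (add_le_add (add_le_add b1 b2) b3) b4)
    _ ≤ (K * (K * (2 * e1)) * ‖U‖ + K * (2 * e1) + K * K * ‖U‖ + ‖U‖) * (‖Δ‖ * ‖Δ‖) := by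
        nlinarith [norm_nonneg U, norm_nonneg Δ, hΔ1, hKΔ, he10, hK0]

set_option maxHeartbeats 1000000 in
/-- First-order expansion of the polar projection: for unitary `U`,
`(U + Δ)[(U + Δ)ᴴ(U + Δ)]^{-1/2} = U + (1/2)(Δ − U Δᴴ U) + o(‖Δ‖)` as `Δ → 0`. -/
theorem polar_projection_first_order {n : ℕ}
    (U : Matrix (Fin n) (Fin n) ℂ) (hU : U ∈ Matrix.unitaryGroup (Fin n) ℂ) :
    (fun Δ : Matrix (Fin n) (Fin n) ℂ =>
        (U + Δ) * ((Matrix.posSemidef_conjTranspose_mul_self (U + Δ)).sqrt)⁻¹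
          - (U + ((1 : ℂ)/2) • (Δ - U * Δᴴ * U)))
      =o[𝓝 0] (fun Δ : Matrix (Fin n) (Fin n) ℂ => Δ) := by
  have hU1 : Uᴴ * U = 1 := by
    have := Matrix.mem_unitaryGroup_iff'.mp hU
    rwa [Matrix.star_eq_conjTranspose] at this
  have hU2 : U * Uᴴ = 1 := by
    have := Matrix.mem_unitaryGroup_iff.mp hU
    rwa [Matrix.star_eq_conjTranspose] at this
  set K : ℝ := 2 * ‖U‖ + 1 with hKdef
  have hK0 : 0 < K := by positivity
  set e1 : ℝ := ‖(1 : Matrix (Fin n) (Fin n) ℂ)‖ with he1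
  set C : ℝ := K * (K * (2 * e1)) * ‖U‖ + K * (2 * e1) + K * K * ‖U‖ + ‖U‖ with hCdef
  set δ : ℝ := min 1 (1 / (2 * K)) with hδdef
  have hδ0 : 0 < δ := lt_min one_pos (by positivity)
  have h1 : (fun Δ : Matrix (Fin n) (Fin n) ℂ =>
        (U + Δ) * ((Matrix.posSemidef_conjTranspose_mul_self (U + Δ)).sqrt)⁻¹
          - (U + ((1 : ℂ)/2) • (Δ - U * Δᴴ * U)))
      =O[𝓝 0] (fun Δ : Matrix (Fin n) (Fin n) ℂ => ‖Δ‖ * ‖Δ‖) := by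
    apply Asymptotics.IsBigO.of_bound C
    filter_upwards [Metric.ball_mem_nhds (0 : Matrix (Fin n) (Fin n) ℂ) hδ0] with Δ hΔ
    rw [Metric.mem_ball, dist_zero_right] at hΔ
    have hΔ1 : ‖Δ‖ ≤ 1 := le_of_lt (lt_of_lt_of_le hΔ (min_le_left _ _))
    have hΔ2 : ‖Δ‖ < 1 / (2 * K) := lt_of_lt_of_le hΔ (min_le_right _ _)
    have hb := aux_main_bound U hU1 hU2 Δ hΔ1 hΔ2
    rw [Real.norm_of_nonneg (mul_nonneg (norm_nonneg _) (norm_nonneg _))]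
    exact hb
  have h2 : (fun Δ : Matrix (Fin n) (Fin n) ℂ => ‖Δ‖ * ‖Δ‖)
      =o[𝓝 0] (fun Δ : Matrix (Fin n) (Fin n) ℂ => Δ) := by
    rw [Asymptotics.isLittleO_iff]
    intro c hc
    filter_upwards [Metric.ball_mem_nhds (0 : Matrix (Fin n) (Fin n) ℂ) hc] with Δ hΔ
    rw [Metric.mem_ball, dist_zero_right] at hΔ
    rw [Real.norm_of_nonneg (mul_nonneg (norm_nonneg _) (norm_nonneg _))]
    exact mul_le_mul_of_nonneg_right hΔ.le (norm_nonneg _)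
  exact h1.trans_isLittleO h2
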